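/- arXiv:2602.01235 — 2 statements merged into one kernel-verified Lean document; each statement's English description precedes it below -/
import Mathlib

section
/- For every integer k ≥ 1 and every integer ℓ with 0 ≤ ℓ ≤ k, the following identity holds in ℚ (with the convention that the binomial coefficient C(n,r) vanishes unless 0 ≤ r ≤ n): Σ_{j=0}^{⌊k/2⌋} (−1)^j · (k/(k−j)) · C(k−j, j) · C(k−2j, ℓ−j) = 1 if ℓ = 0 or ℓ = k, and = 0 if 1 ≤ ℓ ≤ k−1. -/
open Finset
open scoped BigOperators Nat


private lemma choose_swap {n j l : ℕ} (hjl : j ≤ l) (hjn : j ≤ n) :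
    ((n.choose j : ℚ) * ((n - j).choose (l - j) : ℚ)) = (n.choose l : ℚ) * (l.choose j : ℚ) := by
  rcases le_or_gt l n with h | h
  · exact_mod_cast congrArg (Nat.cast : ℕ → ℚ) (Nat.choose_mul (n := n) hjl).symm
  · rw [Nat.choose_eq_zero_of_lt h, Nat.choose_eq_zero_of_lt (by omega : n - j < l - j)]
    push_cast; ring

private lemma g_one : ∀ m : ℕ, ∀ l : ℕ, l ≤ m →
    ∑ j ∈ Finset.range (l + 1), (-1 : ℚ) ^ j * (l.choose j : ℚ) * ((m - j).choose l : ℚ) = 1 := by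
  intro m
  induction m using Nat.strong_induction_on with
  | _ m ih =>
  intro l hl
  rcases eq_or_lt_of_le hl with rfl | hlt
  · rw [Finset.sum_range_succ']
    rw [Finset.sum_eq_zero (fun i hi => by
      rw [Nat.choose_eq_zero_of_lt (show l - (i+1) < l by simp at hi; omega)]
      simp)]
    simp
  · rcases Nat.eq_zero_or_pos l with rfl | hlpos
    · simp
    obtain ⟨l', rfl⟩ : ∃ l', l = l' + 1 := ⟨l - 1, by omega⟩
    obtain ⟨m', rfl⟩ : ∃ m', m = m' + 1 := ⟨m - 1, by omega⟩
    have hlm : l' + 1 ≤ m' := by omega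
    have split : ∀ j ∈ Finset.range (l' + 1 + 1),
        (-1:ℚ)^j * ((l'+1).choose j : ℚ) * ((m' + 1 - j).choose (l'+1) : ℚ)
          = (-1:ℚ)^j * ((l'+1).choose j : ℚ) * ((m' - j).choose l' : ℚ)
            + (-1:ℚ)^j * ((l'+1).choose j : ℚ) * ((m' - j).choose (l'+1) : ℚ) := by
      intro j hj
      simp only [Finset.mem_range] at hj
      rw [show m' + 1 - j = (m' - j) + 1 by omega, Nat.choose_succ_succ]
      push_cast; ring
    rw [Finset.sum_congr rfl split, Finset.sum_add_distrib]
    have hg1 : ∑ j ∈ Finset.range (l' + 1 + 1),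
        (-1:ℚ)^j * ((l'+1).choose j : ℚ) * ((m' - j).choose (l'+1) : ℚ) = 1 :=
      ih m' (by omega) (l'+1) hlm
    -- key : the other sum is 0
    have hSa : ∑ i ∈ Finset.range (l' + 1),
        (-1:ℚ)^i * (l'.choose i : ℚ) * ((m' - 1 - i).choose l' : ℚ) = 1 := by
      exact ih (m' - 1) (by omega) l' (by omega)
    have hG : ∑ j ∈ Finset.range (l' + 1 + 1),
        (-1:ℚ)^j * (l'.choose j : ℚ) * ((m' - j).choose l' : ℚ) = 1 := by
      rw [Finset.sum_range_succ, Nat.choose_eq_zero_of_lt (by omega : l' < l' + 1)]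
      rw [ih m' (by omega) l' (by omega)]
      simp
    have hSb : ∑ i ∈ Finset.range (l' + 1),
        (-1:ℚ)^i * (l'.choose (i+1) : ℚ) * ((m' - 1 - i).choose l' : ℚ)
          = (m'.choose l' : ℚ) - 1 := by
      rw [Finset.sum_range_succ'] at hG
      have : ∀ i ∈ Finset.range (l' + 1),
          (-1:ℚ)^(i+1) * (l'.choose (i+1) : ℚ) * ((m' - (i+1)).choose l' : ℚ)
            = -((-1:ℚ)^i * (l'.choose (i+1) : ℚ) * ((m' - 1 - i).choose l' : ℚ)) := by
        intro i hi
        rw [show m' - (i+1) = m' - 1 - i by omega, pow_succ]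
        ring
      rw [Finset.sum_congr rfl this, Finset.sum_neg_distrib] at hG
      simp only [pow_zero, Nat.choose_zero_right, Nat.cast_one, one_mul, mul_one, Nat.sub_zero] at hG
      linarith
    have key : ∑ j ∈ Finset.range (l' + 1 + 1),
        (-1:ℚ)^j * ((l'+1).choose j : ℚ) * ((m' - j).choose l' : ℚ) = 0 := by
      rw [Finset.sum_range_succ']
      have : ∀ i ∈ Finset.range (l' + 1),
          (-1:ℚ)^(i+1) * ((l'+1).choose (i+1) : ℚ) * ((m' - (i+1)).choose l' : ℚ)
            = -((-1:ℚ)^i * (l'.choose i : ℚ) * ((m' - 1 - i).choose l' : ℚ))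
              - (-1:ℚ)^i * (l'.choose (i+1) : ℚ) * ((m' - 1 - i).choose l' : ℚ) := by
        intro i hi
        rw [show m' - (i+1) = m' - 1 - i by omega, Nat.choose_succ_succ, pow_succ]
        push_cast; ring
      rw [Finset.sum_congr rfl this, Finset.sum_sub_distrib, Finset.sum_neg_distrib, hSa, hSb]
      simp only [pow_zero, Nat.choose_zero_right, Nat.cast_one, one_mul, Nat.sub_zero]
      ring
    rw [key, hg1]
    norm_num

theorem binomial_orthogonality (k l : ℕ) (hk : 1 ≤ k) (hl : l ≤ k) :
    ∑ j ∈ Finset.range (k / 2 + 1),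
        (-1 : ℚ) ^ j * ((k : ℚ) / ((k : ℚ) - (j : ℚ))) * ((k - j).choose j : ℚ) *
          (if j ≤ l then ((k - 2 * j).choose (l - j) : ℚ) else 0) =
      if l = 0 ∨ l = k then 1 else 0 := by
  have hk0 : (k : ℚ) ≠ 0 := Nat.cast_ne_zero.mpr (by omega)
  by_cases hl0 : l = 0
  · subst hl0
    rw [if_pos (Or.inl rfl), Finset.sum_eq_single 0]
    · simp [div_self hk0]
    · intro j hj hj0
      rw [if_neg (by omega)]; ring
    · intro h; simp at h
  by_cases hlk : l = k
  · rw [if_pos (Or.inr hlk), Finset.sum_eq_single 0]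
    · simp [div_self hk0, hlk]
    · intro j hj hj0
      simp only [Finset.mem_range] at hj
      rw [if_pos (by omega : j ≤ l),
        Nat.choose_eq_zero_of_lt (by omega : k - 2 * j < l - j)]
      simp
    · intro h; simp at h
  -- main case : 1 ≤ l ≤ k - 1
  rw [if_neg (by tauto)]
  have hl1 : 1 ≤ l := by omega
  have hk2 : 2 ≤ k := by omega
  have coef : ∀ j ∈ Finset.range (k / 2 + 1),
      (-1 : ℚ) ^ j * ((k : ℚ) / ((k : ℚ) - (j : ℚ))) * ((k - j).choose j : ℚ) *
          (if j ≤ l then ((k - 2 * j).choose (l - j) : ℚ) else 0)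
        = (-1 : ℚ) ^ j * ((k - j).choose j : ℚ) *
            (if j ≤ l then ((k - 2 * j).choose (l - j) : ℚ) else 0)
          + (-1 : ℚ) ^ j * (if j = 0 then 0 else ((k - j - 1).choose (j - 1) : ℚ)) *
            (if j ≤ l then ((k - 2 * j).choose (l - j) : ℚ) else 0) := by
    intro j hj
    simp only [Finset.mem_range] at hj
    have hjk : j < k := by omega
    have hden : (k : ℚ) - (j : ℚ) ≠ 0 := by
      have : (j : ℚ) < (k : ℚ) := by exact_mod_cast hjk
      linarith
    have hc : (k : ℚ) / ((k : ℚ) - (j : ℚ)) * ((k - j).choose j : ℚ)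
        = ((k - j).choose j : ℚ)
          + (if j = 0 then 0 else ((k - j - 1).choose (j - 1) : ℚ)) := by
      rcases Nat.eq_zero_or_pos j with rfl | hjpos
      · simp [div_self hk0]
      · rw [if_neg (by omega)]
        have h1 : (k - j) * ((k - j - 1).choose (j - 1)) = ((k - j).choose j) * j := by
          have h := Nat.add_one_mul_choose_eq (k - j - 1) (j - 1)
          rw [show k - j - 1 + 1 = k - j by omega, show j - 1 + 1 = j by omega] at h
          exact h
        have hnat : k * ((k - j).choose j)
            = (k - j) * ((k - j).choose j) + (k - j) * ((k - j - 1).choose (j - 1)) := by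
          rw [h1, Nat.mul_comm ((k - j).choose j) j, ← Nat.add_mul,
            show (k - j) + j = k by omega]
        have hq : (k : ℚ) * ((k - j).choose j : ℚ)
            = ((k : ℚ) - (j : ℚ)) * ((k - j).choose j : ℚ)
              + ((k : ℚ) - (j : ℚ)) * ((k - j - 1).choose (j - 1) : ℚ) := by
          have := congrArg (Nat.cast : ℕ → ℚ) hnat
          push_cast at this
          rw [Nat.cast_sub hjk.le] at this
          exact this
        field_simp
        linear_combination hq
    linear_combination ((-1 : ℚ) ^ j *
      (if j ≤ l then ((k - 2 * j).choose (l - j) : ℚ) else 0)) * hc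
  rw [Finset.sum_congr rfl coef, Finset.sum_add_distrib]
  have hS1 : ∑ j ∈ Finset.range (k / 2 + 1),
      (-1 : ℚ) ^ j * ((k - j).choose j : ℚ) *
        (if j ≤ l then ((k - 2 * j).choose (l - j) : ℚ) else 0) = 1 := by
    have t1 : ∀ j ∈ Finset.range (k / 2 + 1),
        (-1 : ℚ) ^ j * ((k - j).choose j : ℚ) *
            (if j ≤ l then ((k - 2 * j).choose (l - j) : ℚ) else 0)
          = (-1 : ℚ) ^ j * (l.choose j : ℚ) * ((k - j).choose l : ℚ) := by
      intro j hj
      simp only [Finset.mem_range] at hj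
      by_cases hjl : j ≤ l
      · rw [if_pos hjl, show k - 2 * j = (k - j) - j by omega]
        have hs := choose_swap (n := k - j) hjl (by omega : j ≤ k - j)
        linear_combination ((-1 : ℚ) ^ j) * hs
      · rw [if_neg hjl, Nat.choose_eq_zero_of_lt (by omega : l < j)]
        simp
    rw [Finset.sum_congr rfl t1]
    have e1 := Finset.sum_subset (Finset.range_subset_range.mpr (by omega : k / 2 + 1 ≤ k + 1))
      (f := fun j => (-1 : ℚ) ^ j * (l.choose j : ℚ) * ((k - j).choose l : ℚ))
      (fun j hj hj' => by
        simp only [Finset.mem_range] at hj hj'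
        by_cases hjl : j ≤ l
        · simp [Nat.choose_eq_zero_of_lt (by omega : k - j < l)]
        · simp [Nat.choose_eq_zero_of_lt (by omega : l < j)])
    have e2 := Finset.sum_subset (Finset.range_subset_range.mpr (by omega : l + 1 ≤ k + 1))
      (f := fun j => (-1 : ℚ) ^ j * (l.choose j : ℚ) * ((k - j).choose l : ℚ))
      (fun j hj hj' => by
        simp only [Finset.mem_range] at hj hj'
        simp [Nat.choose_eq_zero_of_lt (by omega : l < j)])
    rw [e1, ← e2]
    exact g_one k l hl
  have hS2 : ∑ j ∈ Finset.range (k / 2 + 1),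
      (-1 : ℚ) ^ j * (if j = 0 then 0 else ((k - j - 1).choose (j - 1) : ℚ)) *
        (if j ≤ l then ((k - 2 * j).choose (l - j) : ℚ) else 0) = -1 := by
    rw [Finset.sum_range_succ']
    have t2 : ∀ i ∈ Finset.range (k / 2),
        (-1 : ℚ) ^ (i + 1) * (if i + 1 = 0 then 0 else ((k - (i + 1) - 1).choose (i + 1 - 1) : ℚ)) *
            (if i + 1 ≤ l then ((k - 2 * (i + 1)).choose (l - (i + 1)) : ℚ) else 0)
          = -((-1 : ℚ) ^ i * ((l - 1).choose i : ℚ) * ((k - 2 - i).choose (l - 1) : ℚ)) := by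
      intro i hi
      simp only [Finset.mem_range] at hi
      rw [if_neg (by omega)]
      by_cases hil : i + 1 ≤ l
      · rw [if_pos hil, show k - (i + 1) - 1 = k - 2 - i by omega,
          show i + 1 - 1 = i by omega,
          show k - 2 * (i + 1) = (k - 2 - i) - i by omega,
          show l - (i + 1) = (l - 1) - i by omega, pow_succ]
        have hs := choose_swap (n := k - 2 - i) (by omega : i ≤ l - 1)
          (by omega : i ≤ k - 2 - i)
        linear_combination (-(-1 : ℚ) ^ i) * hs
      · rw [if_neg hil, Nat.choose_eq_zero_of_lt (by omega : l - 1 < i)]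
        simp
    rw [Finset.sum_congr rfl t2, Finset.sum_neg_distrib]
    have e1 := Finset.sum_subset (Finset.range_subset_range.mpr (by omega : k / 2 ≤ k + 1))
      (f := fun i => (-1 : ℚ) ^ i * ((l - 1).choose i : ℚ) * ((k - 2 - i).choose (l - 1) : ℚ))
      (fun i hi hi' => by
        simp only [Finset.mem_range] at hi hi'
        by_cases hil : i ≤ l - 1
        · simp [Nat.choose_eq_zero_of_lt (by omega : k - 2 - i < l - 1)]
        · simp [Nat.choose_eq_zero_of_lt (by omega : l - 1 < i)])
    have e2 := Finset.sum_subset (Finset.range_subset_range.mpr (by omega : (l - 1) + 1 ≤ k + 1))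
      (f := fun i => (-1 : ℚ) ^ i * ((l - 1).choose i : ℚ) * ((k - 2 - i).choose (l - 1) : ℚ))
      (fun i hi hi' => by
        simp only [Finset.mem_range] at hi hi'
        simp [Nat.choose_eq_zero_of_lt (by omega : l - 1 < i)])
    rw [e1, ← e2]
    have hg := g_one (k - 2) (l - 1) (by omega)
    have : ∀ i ∈ Finset.range ((l - 1) + 1),
        (-1 : ℚ) ^ i * ((l - 1).choose i : ℚ) * ((k - 2 - i).choose (l - 1) : ℚ)
          = (-1 : ℚ) ^ i * ((l - 1).choose i : ℚ) * (((k - 2) - i).choose (l - 1) : ℚ) := by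
      intro i hi; rfl
    rw [hg]
    simp
  rw [hS1, hS2]
  norm_num
end

section
/- Let a, b, f ∈ ℂ be such that a+b+1/2, 2a+2b, f and 2f are not nonpositive integers and are nonzero. Then for every x ∈ ℂ with |x| < 1: ( Σ_{k=0}^∞ (a)_k (b)_k x^k / ((a+b+1/2)_k · k!) ) · ( Σ_{k=0}^∞ (a)_k (b)_k (f+1)_k x^k / ((a+b+1/2)_k (f)_k · k!) ) = Σ_{k=0}^∞ (2a)_k (2b)_k (a+b)_k (2f+1)_k x^k / ((a+b+1/2)_k (2a+2b)_k (2f)_k · k!). -/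
open Finset
open scoped BigOperators Nat

/-- Rising factorial (Pochhammer symbol) `(z)_k = z (z+1) ⋯ (z+k-1)`. -/
noncomputable def rf (z : ℂ) (k : ℕ) : ℂ := ∏ i ∈ Finset.range k, (z + i)

open Filter
open scoped Topology

lemma rf_succ (z : ℂ) (k : ℕ) : rf z (k + 1) = rf z k * (z + k) := Finset.prod_range_succ _ _
lemma rf_ne_zero {z : ℂ} (hz : ∀ n : ℕ, z ≠ -(n : ℂ)) (k : ℕ) : rf z k ≠ 0 := by
  refine Finset.prod_ne_zero_iff.2 fun i _ => ?_
  intro h; exact hz i (by linear_combination h)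
lemma add_nat_ne_zero {z : ℂ} (hz : ∀ n : ℕ, z ≠ -(n : ℂ)) (k : ℕ) : z + (k : ℂ) ≠ 0 := by
  intro h; exact hz k (by linear_combination h)
noncomputable def Ac (a b : ℂ) (k : ℕ) : ℂ :=
  rf a k * rf b k / (rf (a + b + 1/2) k * (k.factorial : ℂ))
noncomputable def Qc (a b k i : ℂ) : ℂ :=
  i * (1 - 3*i + 2*i^2 + (3/2)*k - 3*k*i - a - b - 3*a*k - 3*b*k - 2*a^2 - 4*a*b - 2*b^2)



lemma Ac_succ (a b : ℂ) (h1 : ∀ n : ℕ, a + b + 1/2 ≠ -(n : ℂ)) (j : ℕ) :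
    Ac a b (j + 1) * (((a + b + 1/2) + (j : ℂ)) * ((j : ℂ) + 1))
      = Ac a b j * ((a + j) * (b + j)) := by
  have hcj := rf_ne_zero h1 j
  have hcaddj := add_nat_ne_zero h1 j
  have hfj : ((j.factorial : ℂ)) ≠ 0 := Nat.cast_ne_zero.2 j.factorial_ne_zero
  have hj1 : ((j : ℂ) + 1) ≠ 0 := Nat.cast_add_one_ne_zero j
  unfold Ac
  rw [rf_succ a j, rf_succ b j, rf_succ (a + b + 1/2) j, Nat.factorial_succ j]
  push_cast
  generalize rf a j = p3
  generalize rf b j = p4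
  generalize hg2 : rf (a + b + 1/2) j = c2 at hcj ⊢
  generalize hg4 : (j.factorial : ℂ) = f2 at hfj ⊢
  generalize hg5 : (a + b + 1/2) + (j : ℂ) = d at hcaddj ⊢
  field_simp

set_option maxHeartbeats 1000000 in
lemma step (a b : ℂ) (h1 : ∀ n : ℕ, a + b + 1/2 ≠ -(n : ℂ)) (i j : ℕ) :
    ((a + b + 1/2) + ((i : ℂ) + j)) * (2*a + 2*b + ((i : ℂ) + j)) * (((i : ℂ) + j) + 1) *
        (Ac a b i * Ac a b (j + 1))
      - (2*a + ((i : ℂ) + j)) * (2*b + ((i : ℂ) + j)) * ((a + b) + ((i : ℂ) + j)) *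
        (Ac a b i * Ac a b j)
    = Qc a b ((i : ℂ) + j) ((i : ℂ) + 1) * (Ac a b (i + 1) * Ac a b j)
      - Qc a b ((i : ℂ) + j) (i : ℂ) * (Ac a b i * Ac a b (j + 1)) := by
  have hcaddi := add_nat_ne_zero h1 i
  have hcaddj := add_nat_ne_zero h1 j
  have hi1 : ((i : ℂ) + 1) ≠ 0 := Nat.cast_add_one_ne_zero i
  have hj1 : ((j : ℂ) + 1) ≠ 0 := Nat.cast_add_one_ne_zero j
  have hs : (((a + b + 1/2) + (i : ℂ)) * ((i : ℂ) + 1)) *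
      ((((a + b + 1/2) + (j : ℂ)) * ((j : ℂ) + 1))) ≠ 0 :=
    mul_ne_zero (mul_ne_zero hcaddi hi1) (mul_ne_zero hcaddj hj1)
  apply mul_left_cancel₀ hs
  have h2 := Ac_succ a b h1 j
  have h3 := Ac_succ a b h1 i
  unfold Qc
  linear_combination
    ((((a + b + 1/2) + (i : ℂ)) * ((i : ℂ) + 1)) * ((((a + b + 1/2) + ((i : ℂ) + (j : ℂ))) * (2*a + 2*b + ((i : ℂ) + (j : ℂ))) * (((i : ℂ) + (j : ℂ)) + 1)) + ((i : ℂ) * (1 - 3*(i : ℂ) + 2*(i : ℂ)^2 + (3/2)*((i : ℂ) + (j : ℂ)) - 3*((i : ℂ) + (j : ℂ))*(i : ℂ) - a - b - 3*a*((i : ℂ) + (j : ℂ)) - 3*b*((i : ℂ) + (j : ℂ)) - 2*a^2 - 4*a*b - 2*b^2))) * Ac a b i) * h2 - ((((a + b + 1/2) + (j : ℂ)) * ((j : ℂ) + 1)) * (((i : ℂ) + 1) * (1 - 3*((i : ℂ) + 1) + 2*((i : ℂ) + 1)^2 + (3/2)*((i : ℂ) + (j : ℂ)) - 3*((i : ℂ)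 + (j : ℂ))*((i : ℂ) + 1) - a - b - 3*a*((i : ℂ) + (j : ℂ)) - 3*b*((i : ℂ) + (j : ℂ)) - 2*a^2 - 4*a*b - 2*b^2)) * Ac a b j) * h3

lemma Ac_zero (a b : ℂ) : Ac a b 0 = 1 := by simp [Ac, rf]

noncomputable def Sc (a b : ℂ) (k : ℕ) : ℂ :=
  ∑ p ∈ Finset.HasAntidiagonal.antidiagonal k, Ac a b p.1 * Ac a b p.2

noncomputable def Dc (a b : ℂ) (k : ℕ) : ℂ :=
  rf (2*a) k * rf (2*b) k * rf (a+b) k /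
    (rf (a+b+1/2) k * rf (2*a+2*b) k * (k.factorial : ℂ))

lemma Sc_eq_range (a b : ℂ) (k : ℕ) :
    Sc a b k = ∑ i ∈ range (k+1), Ac a b i * Ac a b (k - i) := by
  rw [Sc, Finset.Nat.sum_antidiagonal_eq_sum_range_succ_mk]


lemma Sc_rec (a b : ℂ) (h1 : ∀ n : ℕ, a + b + 1/2 ≠ -(n : ℂ)) (k : ℕ) :
    ((a+b+1/2) + (k:ℂ)) * (2*a+2*b + (k:ℂ)) * ((k:ℂ)+1) * Sc a b (k+1)
      = (2*a + (k:ℂ)) * (2*b + (k:ℂ)) * ((a+b) + (k:ℂ)) * Sc a b k := by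
  have tele := Finset.sum_range_sub
    (fun m : ℕ => Qc a b (k:ℂ) (m:ℂ) * (Ac a b m * Ac a b (k+1-m))) (k+1)
  simp only [Nat.add_sub_add_right] at tele
  have key : ∑ i ∈ range (k+1),
      (((a+b+1/2) + (k:ℂ)) * (2*a+2*b + (k:ℂ)) * ((k:ℂ)+1) * (Ac a b i * Ac a b (k+1-i))
        - (2*a + (k:ℂ)) * (2*b + (k:ℂ)) * ((a+b) + (k:ℂ)) * (Ac a b i * Ac a b (k-i)))
      = ∑ i ∈ range (k+1),
        (Qc a b (k:ℂ) ((i+1 : ℕ):ℂ) * (Ac a b (i+1) * Ac a b (k-i))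
          - Qc a b (k:ℂ) ((i : ℕ):ℂ) * (Ac a b i * Ac a b (k+1-i))) := by
    refine Finset.sum_congr rfl fun i hi => ?_
    simp only [Finset.mem_range] at hi
    set j := k - i with hj
    have hij : i + j = k := by omega
    have e1 : k + 1 - i = j + 1 := by omega
    rw [e1]
    have hk : (k : ℂ) = (i : ℂ) + (j : ℂ) := by exact_mod_cast hij.symm
    rw [hk]
    push_cast
    exact step a b h1 i j
  rw [tele] at key
  have hQ0 : Qc a b (k:ℂ) ((0:ℕ):ℂ) = 0 := by simp [Qc]
  have hQtop : Qc a b (k:ℂ) (((k+1:ℕ)):ℂ)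
      = -(((a + b + 1/2) + (k:ℂ)) * (2*a + 2*b + (k:ℂ)) * ((k:ℂ) + 1)) := by
    push_cast; unfold Qc; ring
  rw [hQ0, hQtop, show k - k = 0 from by omega] at key
  rw [Finset.sum_sub_distrib, ← Finset.mul_sum, ← Finset.mul_sum] at key
  have hS1 : Sc a b (k + 1)
      = (∑ i ∈ range (k+1), Ac a b i * Ac a b (k+1-i)) + Ac a b (k+1) * Ac a b 0 := by
    rw [Sc_eq_range, Finset.sum_range_succ]; norm_num
  rw [← Sc_eq_range] at key
  linear_combination key + ((a+b+1/2 + (k:ℂ)) * (2*a+2*b + (k:ℂ)) * ((k:ℂ)+1)) * hS1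

lemma Dc_rec (a b : ℂ) (h1 : ∀ n : ℕ, a + b + 1/2 ≠ -(n : ℂ))
    (h2 : ∀ n : ℕ, 2*a + 2*b ≠ -(n : ℂ)) (k : ℕ) :
    ((a+b+1/2) + (k:ℂ)) * (2*a+2*b + (k:ℂ)) * ((k:ℂ)+1) * Dc a b (k+1)
      = (2*a + (k:ℂ)) * (2*b + (k:ℂ)) * ((a+b) + (k:ℂ)) * Dc a b k := by
  have hc := rf_ne_zero h1 k
  have h2c := rf_ne_zero h2 k
  have hcadd := add_nat_ne_zero h1 k
  have h2cadd := add_nat_ne_zero h2 k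
  have hf : ((k.factorial : ℂ)) ≠ 0 := Nat.cast_ne_zero.2 k.factorial_ne_zero
  have hk1 : ((k : ℂ) + 1) ≠ 0 := Nat.cast_add_one_ne_zero k
  unfold Dc
  rw [rf_succ (2*a) k, rf_succ (2*b) k, rf_succ (a+b) k, rf_succ (a+b+1/2) k,
      rf_succ (2*a+2*b) k, Nat.factorial_succ k]
  push_cast
  generalize rf (2*a) k = n1
  generalize rf (2*b) k = n2
  generalize rf (a+b) k = n3
  generalize hg1 : rf (a+b+1/2) k = c1 at hc ⊢
  generalize hg2 : rf (2*a+2*b) k = c2 at h2c ⊢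
  generalize hg3 : (k.factorial : ℂ) = ff at hf ⊢
  generalize hg4 : (a+b+1/2) + (k:ℂ) = d1 at hcadd ⊢
  generalize hg5 : 2*a+2*b + (k:ℂ) = d2 at h2cadd ⊢
  field_simp

lemma Sc_eq_Dc (a b : ℂ) (h1 : ∀ n : ℕ, a + b + 1/2 ≠ -(n : ℂ))
    (h2 : ∀ n : ℕ, 2*a + 2*b ≠ -(n : ℂ)) (k : ℕ) :
    Sc a b k = Dc a b k := by
  induction k with
  | zero => simp [Sc, Dc, rf, Ac_zero]
  | succ k ih =>
    have hP : ((a+b+1/2) + (k:ℂ)) * (2*a+2*b + (k:ℂ)) * ((k:ℂ)+1) ≠ 0 :=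
      mul_ne_zero (mul_ne_zero (add_nat_ne_zero h1 k) (add_nat_ne_zero h2 k))
        (Nat.cast_add_one_ne_zero k)
    apply mul_left_cancel₀ hP
    rw [Sc_rec a b h1 k, Dc_rec a b h1 h2 k, ih]


lemma one_ne_neg_nat : ∀ n : ℕ, (1:ℂ) ≠ -(n : ℂ) := by
  intro n h
  have : (1:ℤ) = -(n:ℤ) := by exact_mod_cast h
  omega

lemma rf_shift (f : ℂ) (k : ℕ) : rf (f + 1) k * f = rf f k * (f + (k:ℂ)) := by
  induction k with
  | zero => simp [rf]
  | succ k ih =>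
    rw [rf_succ, rf_succ]
    push_cast
    linear_combination (f + 1 + (k:ℂ)) * ih

lemma tendsto_shift_div (u v : ℂ) (hv : ∀ n : ℕ, v + (n:ℂ) ≠ 0) :
    Filter.Tendsto (fun k : ℕ => (u + (k:ℂ)) / (v + (k:ℂ))) atTop (𝓝 1) := by
  have hnorm : Filter.Tendsto (fun k : ℕ => ‖v + (k:ℂ)‖) atTop atTop := by
    refine tendsto_atTop_mono (fun k : ℕ => ?_)
      (tendsto_atTop_add_const_right atTop (-‖v‖) tendsto_natCast_atTop_atTop)
    have h1 : ‖(k:ℂ)‖ - ‖-v‖ ≤ ‖(k:ℂ) - (-v)‖ := norm_sub_norm_le _ _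
    have h2 : ‖(k:ℂ)‖ = (k:ℝ) := by simp
    have h3 : (k:ℂ) - (-v) = v + (k:ℂ) := by ring
    rw [h2, h3, norm_neg] at h1
    linarith
  have h0 : Filter.Tendsto (fun k : ℕ => (u - v) / (v + (k:ℂ))) atTop (𝓝 0) := by
    rw [tendsto_zero_iff_norm_tendsto_zero]
    simp only [norm_div]
    exact Filter.Tendsto.div_atTop tendsto_const_nhds hnorm
  have heq : ∀ k : ℕ, (u + (k:ℂ)) / (v + (k:ℂ)) = 1 + (u - v) / (v + (k:ℂ)) := by
    intro k
    field_simp [hv k]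
    ring
  simp only [heq]
  simpa using (tendsto_const_nhds (x := (1:ℂ)) (f := atTop)).add h0

lemma summable_norm_of_ratio {u r : ℕ → ℂ} {x : ℂ} (hx : ‖x‖ < 1)
    (h : ∀ k, u (k + 1) = u k * r k) (hr : Filter.Tendsto r atTop (𝓝 x)) :
    Summable (fun k => ‖u k‖) := by
  have hs : ‖x‖ < (1 + ‖x‖) / 2 := by linarith
  have hs1 : (1 + ‖x‖) / 2 < 1 := by linarith
  have hev : ∀ᶠ k in atTop, ‖r k‖ < (1 + ‖x‖) / 2 := hr.norm.eventually_lt_const hs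
  refine summable_of_ratio_norm_eventually_le hs1 ?_
  filter_upwards [hev] with k hk
  rw [norm_norm, norm_norm, h k, norm_mul, mul_comm ((1 + ‖x‖) / 2) _]
  exact mul_le_mul_of_nonneg_left hk.le (norm_nonneg _)

noncomputable def Bc (a b f : ℂ) (k : ℕ) : ℂ :=
  rf a k * rf b k * rf (f + 1) k / (rf (a + b + 1/2) k * rf f k * (k.factorial : ℂ))

lemma Bc_eq (a b f : ℂ) (h1 : ∀ n : ℕ, a + b + 1/2 ≠ -(n : ℂ))
    (hf : ∀ n : ℕ, f ≠ -(n : ℂ)) (j : ℕ) :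
    Bc a b f j = Ac a b j * ((f + (j:ℂ)) / f) := by
  have h := rf_shift f j
  have hv := rf_ne_zero hf j
  have hc1 := rf_ne_zero h1 j
  have hff : ((j.factorial : ℂ)) ≠ 0 := Nat.cast_ne_zero.2 j.factorial_ne_zero
  have hf0 : f ≠ 0 := by simpa using hf 0
  unfold Bc Ac
  rw [div_mul_div_comm, div_eq_div_iff (by exact mul_ne_zero (mul_ne_zero hc1 hv) hff)
    (by exact mul_ne_zero (mul_ne_zero hc1 hff) hf0)]
  linear_combination (rf a j * rf b j * rf (a + b + 1/2) j * (j.factorial : ℂ)) * h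

lemma term1_ratio (a b x : ℂ) (h1 : ∀ n : ℕ, a + b + 1/2 ≠ -(n : ℂ)) (k : ℕ) :
    Ac a b (k + 1) * x ^ (k + 1)
      = (Ac a b k * x ^ k) *
        (((a + (k:ℂ)) / (1 + (k:ℂ))) * ((b + (k:ℂ)) / ((a + b + 1/2) + (k:ℂ))) * x) := by
  have hd1 : (1 : ℂ) + (k:ℂ) ≠ 0 := add_nat_ne_zero one_ne_neg_nat k
  have hd2 : (a + b + 1/2) + (k:ℂ) ≠ 0 := add_nat_ne_zero h1 k
  have hA : Ac a b (k + 1)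
      = Ac a b k * ((a + (k:ℂ)) * (b + (k:ℂ))) / (((a + b + 1/2) + (k:ℂ)) * ((k:ℂ) + 1)) := by
    rw [eq_div_iff (mul_ne_zero hd2 (Nat.cast_add_one_ne_zero k))]
    linear_combination Ac_succ a b h1 k
  rw [hA, pow_succ]
  have ht : (k:ℂ) + 1 ≠ 0 := Nat.cast_add_one_ne_zero k
  rw [show (1:ℂ) + (k:ℂ) = (k:ℂ) + 1 from by ring]
  generalize hg1 : (a + b + 1/2) + (k:ℂ) = d at hd2 ⊢
  generalize hgt : (k:ℂ) + 1 = t at ht ⊢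
  field_simp

lemma Bc_succ (a b f : ℂ) (h1 : ∀ n : ℕ, a + b + 1/2 ≠ -(n : ℂ))
    (hf : ∀ n : ℕ, f ≠ -(n : ℂ)) (k : ℕ) :
    Bc a b f (k + 1) * ((((a + b + 1/2) + (k:ℂ)) * (f + (k:ℂ))) * ((k:ℂ) + 1))
      = Bc a b f k * ((a + (k:ℂ)) * (b + (k:ℂ)) * ((f + 1) + (k:ℂ))) := by
  have hcj := rf_ne_zero h1 k
  have hvj := rf_ne_zero hf k
  have hcaddj := add_nat_ne_zero h1 k
  have hvaddj := add_nat_ne_zero hf k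
  have hfj : ((k.factorial : ℂ)) ≠ 0 := Nat.cast_ne_zero.2 k.factorial_ne_zero
  have hj1 : ((k : ℂ) + 1) ≠ 0 := Nat.cast_add_one_ne_zero k
  unfold Bc
  rw [rf_succ a k, rf_succ b k, rf_succ (a + b + 1/2) k, rf_succ (f + 1) k, rf_succ f k,
    Nat.factorial_succ k]
  push_cast
  generalize rf a k = p1
  generalize rf b k = p2
  generalize rf (f + 1) k = p3
  generalize hg1 : rf (a + b + 1/2) k = c1 at hcj ⊢
  generalize hg2 : rf f k = c2 at hvj ⊢
  generalize hg3 : (k.factorial : ℂ) = ff at hfj ⊢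
  generalize hg4 : (a + b + 1/2) + (k:ℂ) = d1 at hcaddj ⊢
  generalize hg5 : f + (k:ℂ) = d2 at hvaddj ⊢
  field_simp

lemma term2_ratio (a b f x : ℂ) (h1 : ∀ n : ℕ, a + b + 1/2 ≠ -(n : ℂ))
    (hf : ∀ n : ℕ, f ≠ -(n : ℂ)) (k : ℕ) :
    Bc a b f (k + 1) * x ^ (k + 1)
      = (Bc a b f k * x ^ k) *
        (((a + (k:ℂ)) / (1 + (k:ℂ))) * ((b + (k:ℂ)) / ((a + b + 1/2) + (k:ℂ)))
          * (((f + 1) + (k:ℂ)) / (f + (k:ℂ))) * x) := by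
  have hd1 : (1 : ℂ) + (k:ℂ) ≠ 0 := add_nat_ne_zero one_ne_neg_nat k
  have hd2 : (a + b + 1/2) + (k:ℂ) ≠ 0 := add_nat_ne_zero h1 k
  have hd3 : f + (k:ℂ) ≠ 0 := add_nat_ne_zero hf k
  have hB : Bc a b f (k + 1)
      = Bc a b f k * ((a + (k:ℂ)) * (b + (k:ℂ)) * ((f + 1) + (k:ℂ)))
        / ((((a + b + 1/2) + (k:ℂ)) * (f + (k:ℂ))) * ((k:ℂ) + 1)) := by
    rw [eq_div_iff (mul_ne_zero (mul_ne_zero hd2 hd3) (Nat.cast_add_one_ne_zero k))]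
    exact Bc_succ a b f h1 hf k
  rw [hB, pow_succ]
  have ht : (k:ℂ) + 1 ≠ 0 := Nat.cast_add_one_ne_zero k
  rw [show (1:ℂ) + (k:ℂ) = (k:ℂ) + 1 from by ring]
  generalize hg1 : (a + b + 1/2) + (k:ℂ) = d1 at hd2 ⊢
  generalize hg2 : f + (k:ℂ) = d2 at hd3 ⊢
  generalize hgt : (k:ℂ) + 1 = t at ht ⊢
  field_simp

lemma Sc_def (a b : ℂ) (k : ℕ) :
    Sc a b k = ∑ p ∈ Finset.HasAntidiagonal.antidiagonal k, Ac a b p.1 * Ac a b p.2 := rfl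

lemma sym_lemma (a b : ℂ) (k : ℕ) :
    2 * (∑ p ∈ Finset.HasAntidiagonal.antidiagonal k, Ac a b p.1 * Ac a b p.2 * (p.2:ℂ))
      = (k:ℂ) * Sc a b k := by
  have hswap := Finset.Nat.sum_antidiagonal_swap
    (n := k) (f := fun p : ℕ × ℕ => Ac a b p.1 * Ac a b p.2 * (p.2:ℂ))
  simp only [Prod.fst_swap, Prod.snd_swap] at hswap
  rw [two_mul]
  nth_rewrite 1 [← hswap]
  rw [← Finset.sum_add_distrib, Sc_def, Finset.mul_sum]
  refine Finset.sum_congr rfl fun p hp => ?_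
  have hpk : p.1 + p.2 = k := Finset.HasAntidiagonal.mem_antidiagonal.1 hp
  have hc : ((p.1:ℂ)) + (p.2:ℂ) = (k:ℂ) := by exact_mod_cast hpk
  linear_combination (Ac a b p.1 * Ac a b p.2) * hc

lemma summable1 (a b x : ℂ) (h1 : ∀ n : ℕ, a + b + 1/2 ≠ -(n : ℂ)) (hx : ‖x‖ < 1) :
    Summable (fun k => ‖Ac a b k * x ^ k‖) := by
  have t1 := tendsto_shift_div a 1 (fun n => add_nat_ne_zero one_ne_neg_nat n)
  have t2 := tendsto_shift_div b (a + b + 1/2) (fun n => add_nat_ne_zero h1 n)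
  have htend : Filter.Tendsto
      (fun k : ℕ => ((a + (k:ℂ)) / (1 + (k:ℂ))) * ((b + (k:ℂ)) / ((a + b + 1/2) + (k:ℂ))) * x)
      atTop (𝓝 x) := by
    simpa using (t1.mul t2).mul (tendsto_const_nhds (x := x) (f := atTop))
  exact summable_norm_of_ratio hx (term1_ratio a b x h1) htend

lemma summable2 (a b f x : ℂ) (h1 : ∀ n : ℕ, a + b + 1/2 ≠ -(n : ℂ))
    (hf : ∀ n : ℕ, f ≠ -(n : ℂ)) (hx : ‖x‖ < 1) :
    Summable (fun k => ‖Bc a b f k * x ^ k‖) := by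
  have t1 := tendsto_shift_div a 1 (fun n => add_nat_ne_zero one_ne_neg_nat n)
  have t2 := tendsto_shift_div b (a + b + 1/2) (fun n => add_nat_ne_zero h1 n)
  have t3 := tendsto_shift_div (f + 1) f (fun n => add_nat_ne_zero hf n)
  have htend : Filter.Tendsto
      (fun k : ℕ => ((a + (k:ℂ)) / (1 + (k:ℂ))) * ((b + (k:ℂ)) / ((a + b + 1/2) + (k:ℂ)))
        * (((f + 1) + (k:ℂ)) / (f + (k:ℂ))) * x) atTop (𝓝 x) := by
    simpa using ((t1.mul t2).mul t3).mul (tendsto_const_nhds (x := x) (f := atTop))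
  exact summable_norm_of_ratio hx (term2_ratio a b f x h1 hf) htend

lemma coeff_lemma (a b f x : ℂ) (h1 : ∀ n : ℕ, a + b + 1/2 ≠ -(n : ℂ))
    (h2 : ∀ n : ℕ, 2*a + 2*b ≠ -(n : ℂ)) (hf : ∀ n : ℕ, f ≠ -(n : ℂ)) (k : ℕ) :
    ∑ p ∈ Finset.HasAntidiagonal.antidiagonal k, (Ac a b p.1 * x ^ p.1) * (Bc a b f p.2 * x ^ p.2)
      = (Dc a b k * ((2*f + (k:ℂ)) / (2*f))) * x ^ k := by
  have hf0 : f ≠ 0 := by simpa using hf 0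
  have hstep1 : ∀ p ∈ Finset.HasAntidiagonal.antidiagonal k,
      (Ac a b p.1 * x ^ p.1) * (Bc a b f p.2 * x ^ p.2)
      = (Ac a b p.1 * Ac a b p.2 + Ac a b p.1 * Ac a b p.2 * (p.2:ℂ) * f⁻¹) * x ^ k := by
    intro p hp
    have hpk : p.1 + p.2 = k := Finset.HasAntidiagonal.mem_antidiagonal.1 hp
    rw [Bc_eq a b f h1 hf p.2, ← hpk, pow_add]
    field_simp
  rw [Finset.sum_congr rfl hstep1, ← Finset.sum_mul, Finset.sum_add_distrib]
  have hTval : ∑ p ∈ Finset.HasAntidiagonal.antidiagonal k, Ac a b p.1 * Ac a b p.2 * (p.2:ℂ) * f⁻¹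
      = ((k:ℂ) * Sc a b k / 2) * f⁻¹ := by
    rw [← Finset.sum_mul]
    congr 1
    linear_combination (sym_lemma a b k) / 2
  rw [hTval, ← Sc_def, Sc_eq_Dc a b h1 h2 k]
  congr 1
  field_simp

lemma rhs_term (a b f x : ℂ) (h1 : ∀ n : ℕ, a + b + 1/2 ≠ -(n : ℂ))
    (h2 : ∀ n : ℕ, 2*a + 2*b ≠ -(n : ℂ)) (h2f : ∀ n : ℕ, 2*f ≠ -(n : ℂ)) (k : ℕ) :
    rf (2*a) k * rf (2*b) k * rf (a+b) k * rf (2*f+1) k * x ^ k /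
      (rf (a+b+1/2) k * rf (2*a+2*b) k * rf (2*f) k * (k.factorial : ℂ))
    = (Dc a b k * ((2*f + (k:ℂ)) / (2*f))) * x ^ k := by
  have h := rf_shift (2*f) k
  have h2f0 : (2*f : ℂ) ≠ 0 := by simpa using h2f 0
  have hc := rf_ne_zero h1 k
  have hcc := rf_ne_zero h2 k
  have hv := rf_ne_zero h2f k
  have hff : ((k.factorial : ℂ)) ≠ 0 := Nat.cast_ne_zero.2 k.factorial_ne_zero
  have hR : (Dc a b k * ((2*f + (k:ℂ)) / (2*f))) * x ^ k
      = (rf (2*a) k * rf (2*b) k * rf (a+b) k * (2*f + (k:ℂ)) * x ^ k)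
        / ((rf (a+b+1/2) k * rf (2*a+2*b) k * (k.factorial : ℂ)) * (2*f)) := by
    unfold Dc; ring
  rw [hR, div_eq_div_iff
    (by exact mul_ne_zero (mul_ne_zero (mul_ne_zero hc hcc) hv) hff)
    (by exact mul_ne_zero (mul_ne_zero (mul_ne_zero hc hcc) hff) h2f0)]
  linear_combination (rf (2*a) k * rf (2*b) k * rf (a+b) k * x ^ k *
    rf (a+b+1/2) k * rf (2*a+2*b) k * (k.factorial : ℂ)) * h


theorem clausen_contiguous_f_m_zero (a b f : ℂ)
    (h1 : ∀ n : ℕ, a + b + 1 / 2 ≠ -(n : ℂ))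
    (h2 : ∀ n : ℕ, 2 * a + 2 * b ≠ -(n : ℂ))
    (hf : ∀ n : ℕ, f ≠ -(n : ℂ))
    (h2f : ∀ n : ℕ, 2 * f ≠ -(n : ℂ))
    (x : ℂ) (hx : ‖x‖ < 1) :
    (∑' k : ℕ, rf a k * rf b k * x ^ k / (rf (a + b + 1 / 2) k * (k.factorial : ℂ))) *
      (∑' k : ℕ, rf a k * rf b k * rf (f + 1) k * x ^ k /
        (rf (a + b + 1 / 2) k * rf f k * (k.factorial : ℂ))) =
      ∑' k : ℕ, rf (2 * a) k * rf (2 * b) k * rf (a + b) k * rf (2 * f + 1) k * x ^ k /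
        (rf (a + b + 1 / 2) k * rf (2 * a + 2 * b) k * rf (2 * f) k * (k.factorial : ℂ)) := by
  have hLf : (∑' k : ℕ, rf a k * rf b k * x ^ k / (rf (a + b + 1 / 2) k * (k.factorial : ℂ)))
      = ∑' k : ℕ, Ac a b k * x ^ k := tsum_congr fun k => by unfold Ac; ring
  have hLg : (∑' k : ℕ, rf a k * rf b k * rf (f + 1) k * x ^ k /
        (rf (a + b + 1 / 2) k * rf f k * (k.factorial : ℂ)))
      = ∑' k : ℕ, Bc a b f k * x ^ k := tsum_congr fun k => by unfold Bc; ring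
  rw [hLf, hLg,
    tsum_mul_tsum_eq_tsum_sum_antidiagonal_of_summable_norm
      (summable1 a b x h1 hx) (summable2 a b f x h1 hf hx)]
  refine tsum_congr fun k => ?_
  rw [coeff_lemma a b f x h1 h2 hf k]
  exact (rhs_term a b f x h1 h2 h2f k).symm
end
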